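/- Let H0 be a self-adjoint operator and B a symmetric perturbation with D(H0) ⊆ D(B) such that H = H0 + B is self-adjoint on D(H0), and suppose that B leaves D^∞(H0) invariant, that H0 and H commute algebraically on D^∞(H0) (i.e. H0 H f = H H0 f for all f ∈ D^∞(H0)), and that ‖H0 f‖ ≤ ‖H f‖ for all f ∈ D^∞(H0). Then for every n ∈ ℕ, ‖H0^n f‖ ≤ ‖H^n f‖ for all f ∈ D^∞(H0). -/
import Mathlib


open scoped ComplexInnerProductSpace

namespace Paper

/-- An unbounded linear operator in a Hilbert space `𝓗`, encoded by a distinguished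
domain together with a globally defined linear extension of its action. -/
structure Op (𝓗 : Type*) [NormedAddCommGroup 𝓗] [InnerProductSpace ℂ 𝓗] where
  dom : Submodule ℂ 𝓗
  op : 𝓗 →ₗ[ℂ] 𝓗

variable {𝓗 : Type*} [NormedAddCommGroup 𝓗] [InnerProductSpace ℂ 𝓗]

namespace Op

/-- `T.pw k` is the `k`-th power `T^k` of `T`, as a function. -/
def pw (T : Op 𝓗) (k : ℕ) : 𝓗 → 𝓗 := (fun x => T.op x)^[k]

/-- The domain `D(Tⁿ)` of the `n`-th power of `T`. -/
def domPow (T : Op 𝓗) : ℕ → Set 𝓗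
  | 0 => Set.univ
  | n + 1 => {x | x ∈ T.dom ∧ T.op x ∈ T.domPow n}

/-- The set of C^∞-vectors `D^∞(T) = ⋂ₙ D(Tⁿ)`. -/
def Dinf (T : Op 𝓗) : Set 𝓗 := ⋂ n : ℕ, T.domPow n

/-- `T` is symmetric. -/
def Symmetric (T : Op 𝓗) : Prop :=
  ∀ x ∈ T.dom, ∀ y ∈ T.dom, ⟪T.op x, y⟫ = ⟪x, T.op y⟫

/-- Self-adjointness: densely defined, symmetric, and every vector in the domain of the
adjoint already belongs to the domain (on which the adjoint acts as the operator). -/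
def IsSelfAdjoint (T : Op 𝓗) : Prop :=
  Dense (T.dom : Set 𝓗) ∧ T.Symmetric ∧
    ∀ y z : 𝓗, (∀ x ∈ T.dom, ⟪T.op x, y⟫ = ⟪x, z⟫) → y ∈ T.dom ∧ T.op y = z

/-- `T ≥ 1`. -/
def GeOne (T : Op 𝓗) : Prop := ∀ x ∈ T.dom, ‖x‖ ^ 2 ≤ (⟪T.op x, x⟫).re

/-- The perturbed operator `T + B`, with domain `D(T)`. -/
def pert (T B : Op 𝓗) : Op 𝓗 := ⟨T.dom, T.op + B.op⟩

/-- The graph topology `t_T` on a subset `D`, generated by the seminorms `φ ↦ ‖Tⁿφ‖`,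
i.e. the initial topology for the maps `φ ↦ Tⁿφ`. -/
def graphTopOn (T : Op 𝓗) (D : Set 𝓗) : TopologicalSpace D :=
  ⨅ n : ℕ, TopologicalSpace.induced (fun φ : D => T.pw n ↑φ) inferInstance

end Op

/-- `D0` is a core for the `k`-th power of `T`. -/
def IsCorePow (T : Op 𝓗) (k : ℕ) (D0 : Set 𝓗) : Prop :=
  D0 ⊆ T.domPow k ∧ ∀ x ∈ T.domPow k, ∃ u : ℕ → 𝓗, (∀ n, u n ∈ D0) ∧
    Filter.Tendsto u Filter.atTop (nhds x) ∧
    Filter.Tendsto (fun n => T.pw k (u n)) Filter.atTop (nhds (T.pw k x))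

/-- Membership in the O*-algebra `L†(D)`: `A` maps `D` into `D`, `D ⊆ D(A*)` and
`A* D ⊆ D` (witnessed by `Adag`). -/
def MemLdag (D : Set 𝓗) (A : 𝓗 →ₗ[ℂ] 𝓗) : Prop :=
  (∀ x ∈ D, A x ∈ D) ∧
    ∃ Adag : 𝓗 →ₗ[ℂ] 𝓗, (∀ x ∈ D, Adag x ∈ D) ∧
      ∀ x ∈ D, ∀ y ∈ D, ⟪A x, y⟫ = ⟪x, Adag y⟫

/-- The operator norm of (the bounded extension of) `A`, computed on the unit ball of `D`. -/
noncomputable def opNormOn (D : Set 𝓗) (A : 𝓗 → 𝓗) : ℝ :=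
  ⨆ φ : {ψ : 𝓗 // ψ ∈ D ∧ ‖ψ‖ ≤ 1}, ‖A ↑φ‖

/-- The class `F` of positive, bounded, continuous functions on `[0,∞)` which decrease
faster than any inverse power of `x`. -/
def IsInF (f : ℝ → ℝ) : Prop :=
  Continuous f ∧ (∀ x : ℝ, 0 ≤ x → 0 < f x) ∧
    ∀ k : ℕ, ∃ M : ℝ, ∀ x : ℝ, 0 ≤ x → x ^ k * f x ≤ M

/-- The bounded measurable functional calculus of a self-adjoint operator `T` whose
spectrum is contained in `[a, ∞)`. -/
structure FnCalc (T : Op 𝓗) (a : ℝ) where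
  Φ : (ℝ → ℝ) → (𝓗 →L[ℂ] 𝓗)
  Φ_one : Φ (fun _ => 1) = 1
  Φ_add : ∀ f g : ℝ → ℝ, Measurable f → Measurable g →
    Φ (fun t => f t + g t) = Φ f + Φ g
  Φ_mul : ∀ f g : ℝ → ℝ, Measurable f → Measurable g →
    Φ (fun t => f t * g t) = (Φ f).comp (Φ g)
  Φ_symm : ∀ (f : ℝ → ℝ) (x y : 𝓗), ⟪Φ f x, y⟫ = ⟪x, Φ f y⟫
  Φ_norm : ∀ (f : ℝ → ℝ) (M : ℝ), (∀ t : ℝ, a ≤ t → |f t| ≤ M) →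
    ∀ x : 𝓗, ‖Φ f x‖ ≤ M * ‖x‖
  Φ_supp : ∀ f : ℝ → ℝ, Measurable f → (∀ t : ℝ, a ≤ t → f t = 0) → Φ f = 0
  Φ_pos : ∀ f : ℝ → ℝ, Measurable f → (∀ t : ℝ, a ≤ t → 0 ≤ f t) →
    ∀ x : 𝓗, 0 ≤ (⟪Φ f x, x⟫).re
  Φ_dom : ∀ f : ℝ → ℝ, Measurable f → (∃ M : ℝ, ∀ t : ℝ, a ≤ t → |t * f t| ≤ M) →
    ∀ x : 𝓗, Φ f x ∈ T.dom ∧ T.op (Φ f x) = Φ (fun t => t * f t) x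
  Q_tendsto : ∀ x : 𝓗, Filter.Tendsto
    (fun L : ℝ => Φ (Set.indicator (Set.Icc a L) fun _ => (1 : ℝ)) x)
    Filter.atTop (nhds x)

/-- The spectral projection `Q_L = E([a, L])` of `T`. -/
noncomputable def FnCalc.Q {T : Op 𝓗} {a : ℝ} (c : FnCalc T a) (L : ℝ) : 𝓗 →L[ℂ] 𝓗 :=
  c.Φ (Set.indicator (Set.Icc a L) fun _ => (1 : ℝ))

/-- The seminorm `A ↦ max{‖Tᵏ A f(T)‖, ‖f(T) A Tᵏ‖}` of the quasi-uniform topology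
`τ_*` on `L†(D)`. -/
noncomputable def qseminorm {T : Op 𝓗} {a : ℝ} (c : FnCalc T a) (D : Set 𝓗)
    (f : ℝ → ℝ) (k : ℕ) (A : 𝓗 →ₗ[ℂ] 𝓗) : ℝ :=
  max (opNormOn D fun φ => T.pw k (A (c.Φ f φ)))
      (opNormOn D fun φ => c.Φ f (A (T.pw k φ)))

/-- `i[A,T] = i(A T - T A)`, as a function. -/
noncomputable def commI (A T : 𝓗 → 𝓗) : 𝓗 → 𝓗 :=
  fun φ => Complex.I • (A (T φ) - T (A φ))

/-- Iterated commutators: `itComm A B j = [A, B]_j`, with `[A,B]_0 = B` and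
`[A,B]_{j+1} = [A, [A,B]_j]`. -/
def itComm (A B : 𝓗 → 𝓗) : ℕ → (𝓗 → 𝓗)
  | 0 => B
  | j + 1 => fun φ => A (itComm A B j φ) - itComm A B j (A φ)

variable {𝓗 : Type*} [NormedAddCommGroup 𝓗] [InnerProductSpace ℂ 𝓗] [CompleteSpace 𝓗]

/-- If `B` leaves `D^∞(H0)` invariant, `H0` and `H = H0 + B` commute
algebraically on `D^∞(H0)`, and `‖H0 f‖ ≤ ‖H f‖` on `D^∞(H0)`, then for every `n ∈ ℕ`,
`‖H0^n f‖ ≤ ‖H^n f‖` for all `f ∈ D^∞(H0)`. -/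
theorem stmt13 (H0 B : Op 𝓗) (hsa0 : H0.IsSelfAdjoint)
    (hBsymm : B.Symmetric) (hdomB : (H0.dom : Set 𝓗) ⊆ B.dom)
    (hsaH : (H0.pert B).IsSelfAdjoint)
    (hBinv : ∀ f ∈ H0.Dinf, B.op f ∈ H0.Dinf)
    (hcomm : ∀ f ∈ H0.Dinf, H0.op ((H0.pert B).op f) = (H0.pert B).op (H0.op f))
    (hbound : ∀ f ∈ H0.Dinf, ‖H0.op f‖ ≤ ‖(H0.pert B).op f‖) :
    ∀ n : ℕ, ∀ f ∈ H0.Dinf, ‖H0.pw n f‖ ≤ ‖(H0.pert B).pw n f‖ := by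
  set H := H0.pert B with hH
  -- domPow is closed under addition
  have hadd : ∀ n : ℕ, ∀ x y : 𝓗, x ∈ H0.domPow n → y ∈ H0.domPow n →
      x + y ∈ H0.domPow n := by
    intro n
    induction n with
    | zero => intro x y _ _; trivial
    | succ n ih =>
      intro x y hx hy
      refine ⟨H0.dom.add_mem hx.1 hy.1, ?_⟩
      rw [map_add]
      exact ih _ _ hx.2 hy.2
  -- H0 preserves Dinf
  have hD0 : ∀ f ∈ H0.Dinf, H0.op f ∈ H0.Dinf := by
    intro f hf
    rw [Op.Dinf, Set.mem_iInter] at hf ⊢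
    intro n
    exact (hf (n + 1)).2
  -- Dinf closed under addition
  have hDadd : ∀ x ∈ H0.Dinf, ∀ y ∈ H0.Dinf, x + y ∈ H0.Dinf := by
    intro x hx y hy
    rw [Op.Dinf, Set.mem_iInter] at hx hy ⊢
    intro n
    exact hadd n x y (hx n) (hy n)
  -- H preserves Dinf
  have hDH : ∀ f ∈ H0.Dinf, H.op f ∈ H0.Dinf := by
    intro f hf
    have : H.op f = H0.op f + B.op f := rfl
    rw [this]
    exact hDadd _ (hD0 f hf) _ (hBinv f hf)
  -- powers of H0 preserve Dinf
  have hpwD : ∀ n : ℕ, ∀ f ∈ H0.Dinf, H0.pw n f ∈ H0.Dinf := by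
    intro n
    induction n with
    | zero => intro f hf; exact hf
    | succ n ih =>
      intro f hf
      have : H0.pw (n + 1) f = H0.op (H0.pw n f) := by
        simp [Op.pw, Function.iterate_succ_apply']
      rw [this]
      exact hD0 _ (ih f hf)
  -- powers of H0 commute with H on Dinf
  have hcommpw : ∀ n : ℕ, ∀ f ∈ H0.Dinf, H0.pw n (H.op f) = H.op (H0.pw n f) := by
    intro n
    induction n with
    | zero => intro f hf; rfl
    | succ n ih =>
      intro f hf
      have h1 : H0.pw (n + 1) (H.op f) = H0.op (H0.pw n (H.op f)) := by
        simp [Op.pw, Function.iterate_succ_apply']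
      have h2 : H0.pw (n + 1) f = H0.op (H0.pw n f) := by
        simp [Op.pw, Function.iterate_succ_apply']
      rw [h1, ih f hf, hcomm _ (hpwD n f hf), h2]
  intro n
  induction n with
  | zero => intro f hf; simp [Op.pw]
  | succ n ih =>
    intro f hf
    have h1 : H0.pw (n + 1) f = H0.op (H0.pw n f) := by
      simp [Op.pw, Function.iterate_succ_apply']
    have h2 : H.pw (n + 1) f = H.pw n (H.op f) := by
      simp [Op.pw, Function.iterate_succ_apply]
    calc ‖H0.pw (n + 1) f‖ = ‖H0.op (H0.pw n f)‖ := by rw [h1]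
      _ ≤ ‖H.op (H0.pw n f)‖ := hbound _ (hpwD n f hf)
      _ = ‖H0.pw n (H.op f)‖ := by rw [hcommpw n f hf]
      _ ≤ ‖H.pw n (H.op f)‖ := ih _ (hDH f hf)
      _ = ‖H.pw (n + 1) f‖ := by rw [h2]

end Paper
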